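/- Fix integers n ≥ 2 and s with 0 ≤ s ≤ n−2 and n − s even, and set c = s(s+2). Let β : {0,…,n} × ℕ → ℂ be finitely supported with β_{ik} = 0 unless n − 2i − 2k = −s−2, and set a = Σ β_{ik}·(v_i ⊗ w_k) in the tensor product model M. Then (Ω − c)²(a) = 0 if and only if for every pair (i,k) with 0 ≤ i ≤ n, k ≥ 0, and n − 2i − 2k = −s−2: 0 = β_{i−2,k+2}·(i−1)·i·k·(k+1)²·(k+2) − β_{i−1,k+1}·i·k·(k+1)·(2i(n+2−i) − (n+2) − 2k²) + β_{ik}·((i(n−i+1) − k(k−1))² − i·k·(k+1)·(n−i+1) − (i+1)·(k−1)·k·(n−i)) + β_{i+1,k−1}·(n−i)·(n + 2i(n−i) − 2(k−1)²) + β_{i+2,k−2}·(n−i−1)·(n−i), where β at out-of-range indices is interpreted as 0. -/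

import Mathlib

/-- The tensor product model `M` of `L_n ⊗ V_0`: finitely supported functions on
`{0,…,n} × ℕ`, with standard basis vectors `v_i ⊗ w_k`. -/
abbrev TM (n : ℕ) : Type := (Fin (n + 1) × ℕ) →₀ ℂ

/-- The basis vector `v_i ⊗ w_k` of `M`, with the convention that it is `0`
whenever `i < 0`, `i > n` or `k < 0`. -/
noncomputable def bv (n : ℕ) (i k : ℤ) : TM n :=
  if h : 0 ≤ i ∧ i < (n : ℤ) + 1 ∧ 0 ≤ k then
    Finsupp.single (⟨i.toNat, by omega⟩, k.toNat) (1 : ℂ)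
  else 0

/-- The coefficient of `v_i ⊗ w_k` in `u`, interpreted as `0` for out-of-range
indices. -/
noncomputable def cf (n : ℕ) (u : TM n) (i k : ℤ) : ℂ :=
  if h : 0 ≤ i ∧ i < (n : ℤ) + 1 ∧ 0 ≤ k then u (⟨i.toNat, by omega⟩, k.toNat) else 0

/-- `F(v_i ⊗ w_k) = (i+1)·v_{i+1} ⊗ w_k + v_i ⊗ w_{k+1}`. -/
noncomputable def FM (n : ℕ) : Module.End ℂ (TM n) :=
  Finsupp.lsum ℂ fun p => LinearMap.toSpanSingleton ℂ (TM n)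
    ((((p.1 : ℕ) : ℂ) + 1) • bv n (((p.1 : ℕ) : ℤ) + 1) ((p.2 : ℤ)) +
      bv n ((p.1 : ℕ) : ℤ) ((p.2 : ℤ) + 1))

/-- `E(v_i ⊗ w_k) = (n-i+1)·v_{i-1} ⊗ w_k - k(k-1)·v_i ⊗ w_{k-1}`. -/
noncomputable def EM (n : ℕ) : Module.End ℂ (TM n) :=
  Finsupp.lsum ℂ fun p => LinearMap.toSpanSingleton ℂ (TM n)
    (((n : ℂ) - ((p.1 : ℕ) : ℂ) + 1) • bv n (((p.1 : ℕ) : ℤ) - 1) ((p.2 : ℤ)) -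
      (((p.2 : ℕ) : ℂ) * (((p.2 : ℕ) : ℂ) - 1)) • bv n ((p.1 : ℕ) : ℤ) ((p.2 : ℤ) - 1))

/-- `H(v_i ⊗ w_k) = (n-2i-2k)·v_i ⊗ w_k`. -/
noncomputable def HM (n : ℕ) : Module.End ℂ (TM n) :=
  Finsupp.lsum ℂ fun p => LinearMap.toSpanSingleton ℂ (TM n)
    (((n : ℂ) - 2 * ((p.1 : ℕ) : ℂ) - 2 * ((p.2 : ℕ) : ℂ)) • bv n ((p.1 : ℕ) : ℤ) ((p.2 : ℤ)))

/-- The Casimir operator `Ω = H² + 2H + 4FE` on `M`. -/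
noncomputable def CasM (n : ℕ) : Module.End ℂ (TM n) :=
  HM n * HM n + (2 : ℂ) • HM n + (4 : ℂ) • (FM n * EM n)

section
variable {n : ℕ}

lemma cf_zero (i k : ℤ) : cf n 0 i k = 0 := by
  unfold cf; split <;> simp

lemma cf_add (u v : TM n) (i k : ℤ) : cf n (u + v) i k = cf n u i k + cf n v i k := by
  unfold cf; split <;> simp

lemma cf_sub (u v : TM n) (i k : ℤ) : cf n (u - v) i k = cf n u i k - cf n v i k := by
  unfold cf; split <;> simp

lemma cf_smul (c : ℂ) (u : TM n) (i k : ℤ) : cf n (c • u) i k = c * cf n u i k := by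
  unfold cf; split <;> simp

lemma cf_out (u : TM n) (i k : ℤ) (h : ¬(0 ≤ i ∧ i < (n : ℤ) + 1 ∧ 0 ≤ k)) :
    cf n u i k = 0 := dif_neg h

lemma cf_single (j : Fin (n + 1)) (m : ℕ) (c : ℂ) (i k : ℤ) :
    cf n (Finsupp.single (j, m) c) i k = if i = (j : ℤ) ∧ k = (m : ℤ) then c else 0 := by
  unfold cf
  have hj := j.isLt
  split_ifs with h1 h2 h2
  · rw [Finsupp.single_apply, if_pos]
    obtain ⟨e1, e2⟩ := h2
    refine Prod.ext (Fin.ext ?_) ?_ <;> simp <;> omega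
  · rw [Finsupp.single_apply, if_neg]
    intro he
    have e1 := congrArg (fun q => (q.1 : Fin (n+1)).val) he
    have e2 := congrArg Prod.snd he
    simp at e1 e2
    exact h2 ⟨by omega, by omega⟩
  · exfalso; omega
  · rfl

lemma cf_bv (i' k' i k : ℤ) :
    cf n (bv n i' k') i k =
      if i = i' ∧ k = k' ∧ 0 ≤ i ∧ i < (n : ℤ) + 1 ∧ 0 ≤ k then 1 else 0 := by
  unfold cf bv
  split_ifs with h1 h2 h3 h3 h3 h3
  · rw [Finsupp.single_apply, if_pos]
    obtain ⟨e1, e2, _⟩ := h3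
    refine Prod.ext (Fin.ext ?_) ?_ <;> simp <;> omega
  · rw [Finsupp.single_apply, if_neg]
    intro he
    have e1 := congrArg (fun q => (q.1 : Fin (n+1)).val) he
    have e2 := congrArg Prod.snd he
    simp at e1 e2
    exact h3 ⟨by omega, by omega, h1⟩
  · obtain ⟨rfl, rfl, _⟩ := h3; exact absurd h1 h2
  · simp
  · exfalso; omega
  · rfl

lemma cfF (u : TM n) (i k : ℤ) (h : 0 ≤ i ∧ i < (n : ℤ) + 1 ∧ 0 ≤ k) :
    cf n (FM n u) i k = (i : ℂ) * cf n u (i - 1) k + cf n u i (k - 1) := by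
  induction u using Finsupp.induction_linear with
  | zero => rw [map_zero]; simp [cf_zero]
  | add u v hu hv => rw [map_add, cf_add, cf_add, cf_add, hu, hv]; ring
  | single p c =>
    obtain ⟨j, m⟩ := p
    show cf n ((FM n) _) i k = _
    rw [FM, Finsupp.lsum_single, LinearMap.toSpanSingleton_apply, cf_smul, cf_add,
      cf_smul, cf_bv, cf_bv, cf_single, cf_single]
    dsimp only at *
    split_ifs <;> first | (exfalso; omega) | (push_cast [*]; ring)

lemma cfE (u : TM n) (i k : ℤ) (h : 0 ≤ i ∧ i < (n : ℤ) + 1 ∧ 0 ≤ k) :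
    cf n (EM n u) i k = ((n : ℂ) - (i : ℂ)) * cf n u (i + 1) k
      - ((k : ℂ) + 1) * (k : ℂ) * cf n u i (k + 1) := by
  induction u using Finsupp.induction_linear with
  | zero => rw [map_zero]; simp [cf_zero]
  | add u v hu hv => rw [map_add, cf_add, cf_add, cf_add, hu, hv]; ring
  | single p c =>
    obtain ⟨j, m⟩ := p
    show cf n ((EM n) _) i k = _
    rw [EM, Finsupp.lsum_single, LinearMap.toSpanSingleton_apply, cf_smul, cf_sub,
      cf_smul, cf_smul, cf_bv, cf_bv, cf_single, cf_single]
    dsimp only at *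
    split_ifs <;> first | (exfalso; omega) | (push_cast [*]; ring)

lemma cfH (u : TM n) (i k : ℤ) (h : 0 ≤ i ∧ i < (n : ℤ) + 1 ∧ 0 ≤ k) :
    cf n (HM n u) i k = ((n : ℂ) - 2 * (i : ℂ) - 2 * (k : ℂ)) * cf n u i k := by
  induction u using Finsupp.induction_linear with
  | zero => rw [map_zero]; simp [cf_zero]
  | add u v hu hv => rw [map_add, cf_add, cf_add, hu, hv]; ring
  | single p c =>
    obtain ⟨j, m⟩ := p
    show cf n ((HM n) _) i k = _
    rw [HM, Finsupp.lsum_single, LinearMap.toSpanSingleton_apply, cf_smul,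
      cf_smul, cf_bv, cf_single]
    dsimp only at *
    split_ifs <;> first | (exfalso; omega) | (push_cast [*]; ring)

lemma cfFE (u : TM n) (i k : ℤ) (h : 0 ≤ i ∧ i < (n : ℤ) + 1 ∧ 0 ≤ k) :
    cf n ((FM n * EM n) u) i k =
      ((i : ℂ) * ((n : ℂ) - (i : ℂ) + 1) - (k : ℂ) * ((k : ℂ) - 1)) * cf n u i k
      - (i : ℂ) * (k : ℂ) * ((k : ℂ) + 1) * cf n u (i - 1) (k + 1)
      + ((n : ℂ) - (i : ℂ)) * cf n u (i + 1) (k - 1) := by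
  rw [Module.End.mul_apply, cfF _ i k h]
  have h1 : (i : ℂ) * cf n (EM n u) (i - 1) k =
      (i : ℂ) * (((n : ℂ) - (i : ℂ) + 1) * cf n u i k
        - ((k : ℂ) + 1) * (k : ℂ) * cf n u (i - 1) (k + 1)) := by
    by_cases hi : i = 0
    · subst hi; push_cast; ring
    · rw [cfE u (i - 1) k ⟨by omega, by omega, h.2.2⟩]
      rw [show i - 1 + 1 = i by ring]
      push_cast; ring
  have h2 : cf n (EM n u) i (k - 1) =
      ((n : ℂ) - (i : ℂ)) * cf n u (i + 1) (k - 1) - (k : ℂ) * ((k : ℂ) - 1) * cf n u i k := by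
    by_cases hk : k = 0
    · subst hk
      rw [cf_out (EM n u) i (0 - 1) (by omega), cf_out u (i + 1) (0 - 1) (by omega)]
      push_cast; ring
    · rw [cfE u i (k - 1) ⟨h.1, h.2.1, by omega⟩]
      rw [show k - 1 + 1 = k by ring]
      push_cast; ring
  rw [h1, h2]; ring

lemma cfT (μ : ℂ) (u : TM n) (i k : ℤ) (h : 0 ≤ i ∧ i < (n : ℤ) + 1 ∧ 0 ≤ k) :
    cf n ((CasM n - μ • 1) u) i k =
      (((n : ℂ) - 2 * (i : ℂ) - 2 * (k : ℂ)) ^ 2 + 2 * ((n : ℂ) - 2 * (i : ℂ) - 2 * (k : ℂ)) - μ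
        + 4 * ((i : ℂ) * ((n : ℂ) - (i : ℂ) + 1) - (k : ℂ) * ((k : ℂ) - 1))) * cf n u i k
      - 4 * (i : ℂ) * (k : ℂ) * ((k : ℂ) + 1) * cf n u (i - 1) (k + 1)
      + 4 * ((n : ℂ) - (i : ℂ)) * cf n u (i + 1) (k - 1) := by
  have expand : (CasM n - μ • 1) u =
      HM n (HM n u) + (2 : ℂ) • HM n u + (4 : ℂ) • ((FM n * EM n) u) - μ • u := by
    simp [CasM, LinearMap.sub_apply, LinearMap.add_apply, LinearMap.smul_apply,
      Module.End.mul_apply, Module.End.one_apply]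
  rw [expand, cf_sub, cf_add, cf_add, cf_smul, cf_smul, cf_smul,
    cfH _ i k h, cfH u i k h, cfFE u i k h]
  ring

lemma casT_on (s : ℕ) (u : TM n) (i k i₁ k₁ i₂ k₂ : ℤ)
    (h : 0 ≤ i ∧ i < (n : ℤ) + 1 ∧ 0 ≤ k) (hw : (n : ℤ) - 2 * i - 2 * k = -(s : ℤ) - 2)
    (e1 : i₁ = i - 1) (e2 : k₁ = k + 1) (e3 : i₂ = i + 1) (e4 : k₂ = k - 1) :
    cf n ((CasM n - ((s : ℂ) * ((s : ℂ) + 2)) • 1) u) i k =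
      4 * ((i : ℂ) * ((n : ℂ) - (i : ℂ) + 1) - (k : ℂ) * ((k : ℂ) - 1)) * cf n u i k
      - 4 * (i : ℂ) * (k : ℂ) * ((k : ℂ) + 1) * cf n u i₁ k₁
      + 4 * ((n : ℂ) - (i : ℂ)) * cf n u i₂ k₂ := by
  subst e1 e2 e3 e4
  rw [cfT _ u i k h]
  have hwC : (n : ℂ) - 2 * (i : ℂ) - 2 * (k : ℂ) = -(s : ℂ) - 2 := by
    have h' := congrArg (fun z : ℤ => (z : ℂ)) hw
    push_cast at h'
    linear_combination h'
  rw [hwC]; ring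

lemma casT_off (μ : ℂ) (w : ℤ) (u : TM n)
    (hu : ∀ i k : ℤ, ¬((n : ℤ) - 2 * i - 2 * k = w) → cf n u i k = 0) (i k : ℤ)
    (hik : ¬((n : ℤ) - 2 * i - 2 * k = w)) :
    cf n ((CasM n - μ • 1) u) i k = 0 := by
  by_cases h : 0 ≤ i ∧ i < (n : ℤ) + 1 ∧ 0 ≤ k
  · rw [cfT μ u i k h, hu i k hik, hu (i - 1) (k + 1) (by omega), hu (i + 1) (k - 1) (by omega)]
    ring
  · exact cf_out _ _ _ h

lemma key (s : ℕ) (hn : 2 ≤ n) (u : TM n) (i k : ℤ)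
    (h0 : 0 ≤ i) (h1 : i < (n : ℤ) + 1) (h2 : 0 ≤ k)
    (hw : (n : ℤ) - 2 * i - 2 * k = -(s : ℤ) - 2) :
    cf n ((CasM n - ((s : ℂ) * ((s : ℂ) + 2)) • 1)
        ((CasM n - ((s : ℂ) * ((s : ℂ) + 2)) • 1) u)) i k =
      16 * (cf n u (i - 2) (k + 2) *
              (((i : ℂ) - 1) * (i : ℂ) * (k : ℂ) * ((k : ℂ) + 1) ^ 2 * ((k : ℂ) + 2)) -
            cf n u (i - 1) (k + 1) *
              ((i : ℂ) * (k : ℂ) * ((k : ℂ) + 1) *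
                (2 * (i : ℂ) * ((n : ℂ) + 2 - (i : ℂ)) - ((n : ℂ) + 2) - 2 * (k : ℂ) ^ 2)) +
            cf n u i k *
              (((i : ℂ) * ((n : ℂ) - (i : ℂ) + 1) - (k : ℂ) * ((k : ℂ) - 1)) ^ 2 -
                (i : ℂ) * (k : ℂ) * ((k : ℂ) + 1) * ((n : ℂ) - (i : ℂ) + 1) -
                ((i : ℂ) + 1) * ((k : ℂ) - 1) * (k : ℂ) * ((n : ℂ) - (i : ℂ))) +
            cf n u (i + 1) (k - 1) *
              (((n : ℂ) - (i : ℂ)) *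
                ((n : ℂ) + 2 * (i : ℂ) * ((n : ℂ) - (i : ℂ)) - 2 * ((k : ℂ) - 1) ^ 2)) +
            cf n u (i + 2) (k - 2) *
              (((n : ℂ) - (i : ℂ) - 1) * ((n : ℂ) - (i : ℂ)))) := by
  have hik : 0 ≤ i ∧ i < (n : ℤ) + 1 ∧ 0 ≤ k := ⟨h0, h1, h2⟩
  rw [casT_on s _ i k (i - 1) (k + 1) (i + 1) (k - 1) hik hw rfl rfl rfl rfl]
  have hX := casT_on s u i k (i - 1) (k + 1) (i + 1) (k - 1) hik hw rfl rfl rfl rfl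
  by_cases hi0 : i = 0
  · have hY : cf n ((CasM n - ((s : ℂ) * ((s : ℂ) + 2)) • 1) u) (i - 1) (k + 1) = 0 :=
      cf_out _ _ _ (by omega)
    by_cases hk0 : k = 0
    · have hZ : cf n ((CasM n - ((s : ℂ) * ((s : ℂ) + 2)) • 1) u) (i + 1) (k - 1) = 0 :=
        cf_out _ _ _ (by omega)
      have hAp : cf n u (i + 1) (k - 1) = 0 := cf_out _ _ _ (by omega)
      have hApp : cf n u (i + 2) (k - 2) = 0 := cf_out _ _ _ (by omega)
      rw [hX, hY, hZ, hAp, hApp]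
      subst hi0; subst hk0; push_cast; ring
    · have hZ := casT_on s u (i + 1) (k - 1) i k (i + 2) (k - 2)
        ⟨by omega, by omega, by omega⟩ (by omega) (by ring) (by ring) (by ring) (by ring)
      rw [hX, hY, hZ]; subst hi0; push_cast; ring
  · have hY := casT_on s u (i - 1) (k + 1) (i - 2) (k + 2) i k
      ⟨by omega, by omega, by omega⟩ (by omega) (by ring) (by ring) (by ring) (by ring)
    by_cases hk0 : k = 0
    · have hZ : cf n ((CasM n - ((s : ℂ) * ((s : ℂ) + 2)) • 1) u) (i + 1) (k - 1) = 0 :=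
        cf_out _ _ _ (by omega)
      have hAp : cf n u (i + 1) (k - 1) = 0 := cf_out _ _ _ (by omega)
      have hApp : cf n u (i + 2) (k - 2) = 0 := cf_out _ _ _ (by omega)
      rw [hX, hY, hZ, hAp, hApp]
      subst hk0; push_cast; ring
    · by_cases hin : i = (n : ℤ)
      · have hZ : cf n ((CasM n - ((s : ℂ) * ((s : ℂ) + 2)) • 1) u) (i + 1) (k - 1) = 0 :=
          cf_out _ _ _ (by omega)
        have hAp : cf n u (i + 1) (k - 1) = 0 := cf_out _ _ _ (by omega)
        have hApp : cf n u (i + 2) (k - 2) = 0 := cf_out _ _ _ (by omega)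
        rw [hX, hY, hZ, hAp, hApp]
        subst hin; push_cast; ring
      · have hZ := casT_on s u (i + 1) (k - 1) i k (i + 2) (k - 2)
          ⟨by omega, by omega, by omega⟩ (by omega) (by ring) (by ring) (by ring) (by ring)
        rw [hX, hY, hZ]; push_cast; ring

lemma cf_coe (u : TM n) (q : Fin (n + 1) × ℕ) :
    cf n u ((q.1 : ℕ) : ℤ) ((q.2 : ℤ)) = u q := by
  obtain ⟨j, m⟩ := q
  unfold cf
  rw [dif_pos ⟨by positivity, by exact_mod_cast j.isLt, by positivity⟩]
  refine congrArg u (Prod.ext (Fin.ext ?_) ?_) <;> simp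

end

/-- Fix `n ≥ 2` and `0 ≤ s ≤ n-2` with `n - s` even, `c = s(s+2)`.  For a
finitely supported `β` supported on the weight space `n - 2i - 2k = -s-2`, the
vector `a = Σ β_{ik}·(v_i ⊗ w_k)` satisfies `(Ω - c)²(a) = 0` iff the
five-term recurrence holds at every `(i,k)` with `n - 2i - 2k = -s-2`
(with `β` interpreted as `0` at out-of-range indices). -/
theorem stmt14 (n s : ℕ) (hn : 2 ≤ n) (hs : s ≤ n - 2) (hpar : (n - s) % 2 = 0)
    (a : TM n)
    (hsupp : ∀ (i : Fin (n + 1)) (k : ℕ), a (i, k) ≠ 0 →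
      (n : ℤ) - 2 * ((i : ℕ) : ℤ) - 2 * (k : ℤ) = -(s : ℤ) - 2) :
    ((CasM n - ((s : ℂ) * ((s : ℂ) + 2)) • (1 : Module.End ℂ (TM n))) ^ 2) a = 0 ↔
      ∀ i k : ℕ, i ≤ n → (n : ℤ) - 2 * (i : ℤ) - 2 * (k : ℤ) = -(s : ℤ) - 2 →
        0 = cf n a ((i : ℤ) - 2) ((k : ℤ) + 2) *
              (((i : ℂ) - 1) * (i : ℂ) * (k : ℂ) * ((k : ℂ) + 1) ^ 2 * ((k : ℂ) + 2)) -
            cf n a ((i : ℤ) - 1) ((k : ℤ) + 1) *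
              ((i : ℂ) * (k : ℂ) * ((k : ℂ) + 1) *
                (2 * (i : ℂ) * ((n : ℂ) + 2 - (i : ℂ)) - ((n : ℂ) + 2) - 2 * (k : ℂ) ^ 2)) +
            cf n a (i : ℤ) (k : ℤ) *
              (((i : ℂ) * ((n : ℂ) - (i : ℂ) + 1) - (k : ℂ) * ((k : ℂ) - 1)) ^ 2 -
                (i : ℂ) * (k : ℂ) * ((k : ℂ) + 1) * ((n : ℂ) - (i : ℂ) + 1) -
                ((i : ℂ) + 1) * ((k : ℂ) - 1) * (k : ℂ) * ((n : ℂ) - (i : ℂ))) +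
            cf n a ((i : ℤ) + 1) ((k : ℤ) - 1) *
              (((n : ℂ) - (i : ℂ)) *
                ((n : ℂ) + 2 * (i : ℂ) * ((n : ℂ) - (i : ℂ)) - 2 * ((k : ℂ) - 1) ^ 2)) +
            cf n a ((i : ℤ) + 2) ((k : ℤ) - 2) *
              (((n : ℂ) - (i : ℂ) - 1) * ((n : ℂ) - (i : ℂ))) := by
  have ha : ∀ i k : ℤ, ¬((n : ℤ) - 2 * i - 2 * k = -(s : ℤ) - 2) → cf n a i k = 0 := by
    intro i k hik
    by_cases h : 0 ≤ i ∧ i < (n : ℤ) + 1 ∧ 0 ≤ k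
    · unfold cf
      rw [dif_pos h]
      by_contra hne
      have h2 := hsupp ⟨i.toNat, by omega⟩ k.toNat hne
      simp only [Fin.val_mk] at h2
      omega
    · exact cf_out _ _ _ h
  have hpow : ((CasM n - ((s : ℂ) * ((s : ℂ) + 2)) • (1 : Module.End ℂ (TM n))) ^ 2) a =
      (CasM n - ((s : ℂ) * ((s : ℂ) + 2)) • 1)
        ((CasM n - ((s : ℂ) * ((s : ℂ) + 2)) • 1) a) := by
    rw [pow_two, Module.End.mul_apply]
  constructor
  · intro h0 i k hi hw
    have h1 : cf n ((CasM n - ((s : ℂ) * ((s : ℂ) + 2)) • 1)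
        ((CasM n - ((s : ℂ) * ((s : ℂ) + 2)) • 1) a)) (i : ℤ) (k : ℤ) = 0 := by
      rw [← hpow, h0]
      unfold cf
      split <;> simp
    rw [key s hn a (i : ℤ) (k : ℤ) (by positivity) (by exact_mod_cast Nat.lt_succ_of_le hi)
      (by positivity) hw] at h1
    push_cast at h1 ⊢
    linear_combination -h1 / 16
  · intro hrec
    rw [hpow]
    ext q
    obtain ⟨j, m⟩ := q
    simp only [Finsupp.coe_zero, Pi.zero_apply]
    rw [← cf_coe]
    by_cases hw : (n : ℤ) - 2 * ((j : ℕ) : ℤ) - 2 * (m : ℤ) = -(s : ℤ) - 2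
    · rw [key s hn a _ _ (by positivity) (by exact_mod_cast j.isLt) (by positivity) hw]
      have h2 := hrec (j : ℕ) m (by omega) hw
      push_cast at h2 ⊢
      linear_combination -16 * h2
    · have ha' := casT_off ((s : ℂ) * ((s : ℂ) + 2)) (-(s : ℤ) - 2) a ha
      have ha'' := casT_off ((s : ℂ) * ((s : ℂ) + 2)) (-(s : ℤ) - 2)
        ((CasM n - ((s : ℂ) * ((s : ℂ) + 2)) • 1) a) ha'
      exact ha'' _ _ hw
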